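/- Let C be an EI category of type ℕ, and let d: ℕ → ℕ ∪ {∞} satisfy: d(n) ≠ 0 implies d(n+1) = d(n) − 1. Then the rule J with J(n) = {S(n,r) : r ≤ d(n)}, where S(n,r) is the sieve of morphisms out of n of degree ≥ r, is a Grothendieck topology on C^op; moreover every Grothendieck topology on C^op whose values never contain the empty sieve arises from a unique such function d. -/

import Mathlib

open CategoryTheory

/-- The sieve `S(m,r)` of morphisms of degree `≥ r` out of `m` (Lean convention: the
category structure on ℕ is the opposite of the paper's category of type ℕ, so a Lean
morphism `n ⟶ m` is a paper morphism `m → n`, of degree `n - m`). -/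
def degSieve [SmallCategory ℕ]
    (hne : ∀ m n : ℕ, Nonempty ((n : ℕ) ⟶ (m : ℕ)) ↔ m ≤ n) (m r : ℕ) :
    Sieve (m : ℕ) where
  arrows k _ := m + r ≤ k
  downward_closed := fun {k j} {_} hf g => le_trans hf ((hne k j).mp ⟨g⟩)

open CategoryTheory

section Aux
variable [SmallCategory ℕ]
    (hne : ∀ m n : ℕ, Nonempty ((n : ℕ) ⟶ (m : ℕ)) ↔ m ≤ n)
    (htrans : ∀ (m n : ℕ) (f g : (n : ℕ) ⟶ (m : ℕ)), ∃ e : (n : ℕ) ⟶ (n : ℕ), e ≫ f = g)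
    (hgen : ∀ (m n : ℕ) (f : (n : ℕ) ⟶ (m : ℕ)), m < n →
      ∃ (g : (n : ℕ) ⟶ ((m + 1 : ℕ) : ℕ)) (h : ((m + 1 : ℕ) : ℕ) ⟶ (m : ℕ)), f = g ≫ h)


include hgen in
/-- factorization through an intermediate object -/
lemma factor : ∀ t : ℕ, ∀ m k k' : ℕ, k - m = t → m ≤ k → k ≤ k' →
    ∀ g : (k' : ℕ) ⟶ (m : ℕ), ∃ (a : (k' : ℕ) ⟶ (k : ℕ)) (b : (k : ℕ) ⟶ (m : ℕ)),
      g = a ≫ b := by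
  intro t
  induction t with
  | zero =>
    intro m k k' h1 h2 h3 g
    have : k = m := by omega
    subst this
    exact ⟨g, 𝟙 _, (Category.comp_id g).symm⟩
  | succ t ih =>
    intro m k k' h1 h2 h3 g
    obtain ⟨g₁, h, hg⟩ := hgen m k' g (by omega)
    obtain ⟨a, b, hab⟩ := ih (m+1) k k' (by omega) (by omega) h3 g₁
    exact ⟨a, b ≫ h, by rw [hg, hab, Category.assoc]⟩

include hne htrans hgen in
/-- if a sieve contains an arrow from k, it contains every arrow from any k' ≥ k -/
lemma sieve_mono {m : ℕ} (T : Sieve (m : ℕ)) {k k' : ℕ} (f : (k : ℕ) ⟶ (m : ℕ))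
    (hf : T f) (hkk' : k ≤ k') (g : (k' : ℕ) ⟶ (m : ℕ)) : T g := by
  have hmk : m ≤ k := (hne m k).mp ⟨f⟩
  obtain ⟨a, b, hab⟩ := factor hgen (k - m) m k k' rfl hmk hkk' g
  obtain ⟨e, he⟩ := htrans m k f b
  rw [hab, ← he]
  exact T.downward_closed (T.downward_closed hf e) a

include htrans hgen in
/-- every nonempty sieve is a degree sieve -/
lemma sieve_eq {m : ℕ} (T : Sieve (m : ℕ)) {k₀ : ℕ} (f₀ : (k₀ : ℕ) ⟶ (m : ℕ))
    (hf₀ : T f₀) : ∃ r : ℕ, T = degSieve hne m r := by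
  have hQ : ∃ r : ℕ, ∃ k : ℕ, k ≤ m + r ∧ ∃ f : (k : ℕ) ⟶ (m : ℕ), T f :=
    ⟨k₀, k₀, Nat.le_add_left _ _, f₀, hf₀⟩
  classical
  set r := Nat.find hQ with hr
  obtain ⟨k₁, hk₁, f₁, hf₁⟩ := Nat.find_spec hQ
  refine ⟨r, Sieve.ext fun k f => ?_⟩
  constructor
  · intro hTf
    have hmk : m ≤ k := (hne m k).mp ⟨f⟩
    have : r ≤ k - m := Nat.find_le ⟨k, by omega, f, hTf⟩
    show m + r ≤ k; omega
  · intro (hk : m + r ≤ k)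
    exact sieve_mono hne htrans hgen T f₁ hf₁ (le_trans hk₁ hk) f

lemma deg_inj {m r r' : ℕ} (h : degSieve hne m r = degSieve hne m r') : r = r' := by
  have h1 : ∀ s s' : ℕ, degSieve hne m s = degSieve hne m s' → s' ≤ s := by
    intro s s' hss
    obtain ⟨f⟩ := (hne m (m+s)).mpr (by omega)
    have h2 : degSieve hne m s f := by show m + s ≤ m + s; omega
    rw [hss] at h2
    have : m + s' ≤ m + s := h2
    omega
  exact le_antisymm (h1 r' r h.symm) (h1 r r' h)

lemma deg_le {m r r' : ℕ} (h : r' ≤ r) : degSieve hne m r ≤ degSieve hne m r' :=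
  fun k f hf => by show m + r' ≤ k; have : m + r ≤ k := hf; omega

lemma deg_top (m : ℕ) : degSieve hne m 0 = ⊤ :=
  Sieve.ext fun k f => by
    have : m ≤ k := (hne m k).mp ⟨f⟩
    simp only [Sieve.top_apply, iff_true]
    show m + 0 ≤ k; omega

lemma deg_pullback {m k : ℕ} (f : (k : ℕ) ⟶ (m : ℕ)) (r : ℕ) :
    Sieve.pullback f (degSieve hne m r) = degSieve hne k (m + r - k) := by
  have hmk : m ≤ k := (hne m k).mp ⟨f⟩
  refine Sieve.ext fun j g => ?_
  have hkj : k ≤ j := (hne k j).mp ⟨g⟩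
  show m + r ≤ j ↔ k + (m + r - k) ≤ j
  omega

end Aux

lemma enat_le_of_nat {x y : ℕ∞} (h : ∀ k : ℕ, (k:ℕ∞) ≤ x → (k:ℕ∞) ≤ y) : x ≤ y := by
  cases x with
  | top =>
    have hy : ∀ k : ℕ, (k:ℕ∞) ≤ y := fun k => h k le_top
    cases y with
    | top => exact le_refl _
    | coe m => exact absurd (hy (m+1)) (by exact_mod_cast by omega)
  | coe m => exact h m le_rfl

variable {d : ℕ → ℕ∞} (hd : ∀ n : ℕ, d n ≠ 0 → d (n + 1) = d n - 1)

include hd in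
lemma d_sub : ∀ (s n r : ℕ), (r:ℕ∞) ≤ d n → ((r - s : ℕ):ℕ∞) ≤ d (n + s) := by
  intro s
  induction s with
  | zero => intro n r h; exact_mod_cast h
  | succ s ih =>
    intro n r h
    have h1 : ((r - s : ℕ):ℕ∞) ≤ d (n + s) := ih n r h
    by_cases hr : r - s = 0
    · have : r - (s+1) = 0 := by omega
      rw [this]; exact_mod_cast zero_le
    · have hne0 : d (n + s) ≠ 0 := by
        intro h0
        rw [h0] at h1
        exact hr (by exact_mod_cast le_antisymm h1 (zero_le))
      have : d (n + s + 1) = d (n + s) - 1 := hd (n+s) hne0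
      rw [show n + (s+1) = n + s + 1 from rfl, this]
      calc ((r - (s+1) : ℕ):ℕ∞) = ((r - s : ℕ):ℕ∞) - 1 := by
            rw [show r - (s+1) = (r - s) - 1 from by omega]; exact_mod_cast ENat.coe_sub _ _
        _ ≤ d (n + s) - 1 := tsub_le_tsub_right h1 1

include hd in
lemma d_exact : ∀ (r n : ℕ), (r:ℕ∞) ≤ d n → d (n + r) = d n - r := by
  intro r
  induction r with
  | zero => intro n _; simp
  | succ r ih =>
    intro n h
    have hr : (r:ℕ∞) ≤ d n := le_trans (by exact_mod_cast by omega) h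
    have h1 : d (n + r) = d n - r := ih n hr
    have hpos : d (n + r) ≠ 0 := by
      intro h0
      rw [h1] at h0
      have heq : ((r+1:ℕ):ℕ∞) - (r:ℕ∞) = (1:ℕ∞) := by
        rw [← ENat.coe_sub]; norm_num
      have h2 : (1:ℕ∞) ≤ d n - r := by rw [← heq]; exact tsub_le_tsub_right h (r:ℕ∞)
      rw [h0] at h2; exact absurd (le_antisymm (zero_le) h2) (by norm_num)
    have := hd (n+r) hpos
    rw [show n + (r+1) = n + r + 1 from rfl, this, h1, tsub_tsub]
    norm_num

section Top
variable [SmallCategory ℕ]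
    (hne : ∀ m n : ℕ, Nonempty ((n : ℕ) ⟶ (m : ℕ)) ↔ m ≤ n)
    (htrans : ∀ (m n : ℕ) (f g : (n : ℕ) ⟶ (m : ℕ)), ∃ e : (n : ℕ) ⟶ (n : ℕ), e ≫ f = g)
    (hgen : ∀ (m n : ℕ) (f : (n : ℕ) ⟶ (m : ℕ)), m < n →
      ∃ (g : (n : ℕ) ⟶ ((m + 1 : ℕ) : ℕ)) (h : ((m + 1 : ℕ) : ℕ) ⟶ (m : ℕ)), f = g ≫ h)
    {d : ℕ → ℕ∞} (hd : ∀ n : ℕ, d n ≠ 0 → d (n + 1) = d n - 1)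

/-- the topology attached to `d` -/
def mkTop : GrothendieckTopology ℕ where
  sieves n := {T | ∃ r : ℕ, (r:ℕ∞) ≤ d n ∧ T = degSieve hne n r}
  top_mem' n := ⟨0, by exact_mod_cast zero_le, (deg_top hne n).symm⟩
  pullback_stable' := by
    rintro X Y S f ⟨r, hr, rfl⟩
    have hXY : X ≤ Y := (hne X Y).mp ⟨f⟩
    refine ⟨X + r - Y, ?_, deg_pullback hne f r⟩
    have := d_sub hd (Y - X) X r hr
    rw [show X + (Y - X) = Y from by omega] at this
    refine le_trans ?_ this
    exact_mod_cast Nat.sub_le_sub_right (le_refl (X+r)) Y |>.trans (by omega)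
  transitive' := by
    rintro X S ⟨r, hr, rfl⟩ R hR
    obtain ⟨f⟩ := (hne X (X + r)).mpr (by omega)
    have hfS : degSieve hne X r f := by show X + r ≤ X + r; omega
    obtain ⟨s, hs, hps⟩ := hR hfS
    -- R is nonempty
    obtain ⟨g⟩ := (hne (X+r) (X+r+s)).mpr (by omega)
    have hgp : Sieve.pullback f R g := by
      rw [hps]; show (X+r) + s ≤ X+r+s; omega
    have hgR : R (g ≫ f) := hgp
    obtain ⟨q, hq⟩ := sieve_eq hne htrans hgen R (g ≫ f) hgR
    subst hq
    have hqrs : X + q ≤ X + r + s := hgR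
    refine ⟨q, ?_, rfl⟩
    by_cases hqr : q ≤ r
    · exact le_trans (by exact_mod_cast hqr) hr
    · -- r < q : compute pullback
      rw [deg_pullback hne f q] at hps
      have hs' : X + q - (X + r) = s := deg_inj hne hps
      have hqr' : q - r = s := by omega
      have hdXr : d (X + r) = d X - r := d_exact hd r X hr
      rw [hdXr, ← hqr'] at hs
      calc (q:ℕ∞) = ((q - r : ℕ):ℕ∞) + (r:ℕ∞) := by
            rw [← Nat.cast_add]; congr 1; omega
        _ ≤ (d X - r) + r := add_le_add_left hs _
        _ = d X := tsub_add_cancel_of_le hr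
end Top

section Part2
variable [SmallCategory ℕ]
    (hne : ∀ m n : ℕ, Nonempty ((n : ℕ) ⟶ (m : ℕ)) ↔ m ≤ n)
    (htrans : ∀ (m n : ℕ) (f g : (n : ℕ) ⟶ (m : ℕ)), ∃ e : (n : ℕ) ⟶ (n : ℕ), e ≫ f = g)
    (hgen : ∀ (m n : ℕ) (f : (n : ℕ) ⟶ (m : ℕ)), m < n →
      ∃ (g : (n : ℕ) ⟶ ((m + 1 : ℕ) : ℕ)) (h : ((m + 1 : ℕ) : ℕ) ⟶ (m : ℕ)), f = g ≫ h)
    (J : GrothendieckTopology ℕ)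

/-- the set of degrees covering at `n` -/
def Sset (n : ℕ) : Set ℕ := {r | degSieve hne n r ∈ J (n : ℕ)}

/-- the depth function of a topology -/
noncomputable def dOf (n : ℕ) : ℕ∞ := sSup ((fun r : ℕ => (r : ℕ∞)) '' Sset hne J n)

lemma zero_mem (n : ℕ) : 0 ∈ Sset hne J n := by
  show degSieve hne n 0 ∈ J (n:ℕ)
  rw [deg_top hne n]; exact J.top_mem _

lemma down {n r r' : ℕ} (h : r' ≤ r) (hr : r ∈ Sset hne J n) : r' ∈ Sset hne J n :=
  J.superset_covering (deg_le hne h) hr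

lemma le_dOf {n r : ℕ} (h : r ∈ Sset hne J n) : (r:ℕ∞) ≤ dOf hne J n :=
  le_sSup ⟨r, h, rfl⟩

lemma mem_of_le {n r : ℕ} (h : (r:ℕ∞) ≤ dOf hne J n) : r ∈ Sset hne J n := by
  by_contra hc
  rcases Nat.eq_zero_or_pos r with h0 | h0
  · exact hc (h0 ▸ zero_mem hne J n)
  have hub : dOf hne J n ≤ ((r - 1 : ℕ):ℕ∞) := by
    refine sSup_le ?_
    rintro x ⟨q, hq, rfl⟩
    have : q ≤ r - 1 := by
      by_contra hq'
      exact hc (down hne J (by omega) hq)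
    show ((q:ℕ∞)) ≤ ((r-1:ℕ):ℕ∞); exact_mod_cast this
  have : (r:ℕ∞) ≤ ((r - 1:ℕ):ℕ∞) := le_trans h hub
  have : r ≤ r - 1 := by exact_mod_cast this
  omega

include htrans hgen in
lemma J_iff (hg : ∀ n : ℕ, (⊥ : Sieve (n : ℕ)) ∉ J (n : ℕ)) (n : ℕ) (T : Sieve (n:ℕ)) :
    T ∈ J (n:ℕ) ↔ ∃ r : ℕ, (r:ℕ∞) ≤ dOf hne J n ∧ T = degSieve hne n r := by
  constructor
  · intro hT
    by_cases hemp : ∃ k : ℕ, ∃ f : (k:ℕ) ⟶ (n:ℕ), T f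
    · obtain ⟨k, f, hf⟩ := hemp
      obtain ⟨r, rfl⟩ := sieve_eq hne htrans hgen T f hf
      exact ⟨r, le_dOf hne J hT, rfl⟩
    · exfalso
      have : T = ⊥ :=
        le_antisymm (fun k f hf => absurd ⟨k, f, hf⟩ hemp) bot_le
      exact hg n (this ▸ hT)
  · rintro ⟨r, hr, rfl⟩
    exact mem_of_le hne J hr

lemma shift_up {n k : ℕ} (h : k + 1 ∈ Sset hne J n) : k ∈ Sset hne J (n+1) := by
  obtain ⟨f⟩ := (hne n (n+1)).mpr (by omega)
  have := J.pullback_stable f h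
  rw [deg_pullback hne f (k+1)] at this
  rwa [show n + (k+1) - (n+1) = k from by omega] at this

lemma shift_down {n k : ℕ} (h1 : 1 ∈ Sset hne J n) (h : k ∈ Sset hne J (n+1)) :
    k + 1 ∈ Sset hne J n := by
  refine J.transitive h1 _ ?_
  intro j f hf
  have hj : n + 1 ≤ j := hf
  obtain ⟨g⟩ := (hne (n+1) j).mpr hj
  have h2 := J.pullback_stable g h
  rw [deg_pullback hne g k] at h2
  rw [deg_pullback hne f (k+1)]
  rwa [show n + (k+1) - j = (n+1) + k - j from by omega]

lemma dOf_step (n : ℕ) (h0 : dOf hne J n ≠ 0) : dOf hne J (n+1) = dOf hne J n - 1 := by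
  have h1 : 1 ∈ Sset hne J n :=
    mem_of_le hne J (by exact_mod_cast ENat.one_le_iff_ne_zero.mpr h0)
  apply le_antisymm
  · refine sSup_le ?_
    rintro x ⟨k, hk, rfl⟩
    have : (((k+1:ℕ)):ℕ∞) ≤ dOf hne J n := le_dOf hne J (shift_down hne J h1 hk)
    refine ENat.le_sub_of_add_le_left (by simp) ?_
    rw [add_comm]; exact_mod_cast this
  · refine enat_le_of_nat fun k hk => ?_
    have hk1 : ((k+1:ℕ):ℕ∞) ≤ dOf hne J n := by
      have : (k:ℕ∞) + 1 ≤ (dOf hne J n - 1) + 1 := add_le_add_left hk 1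
      rwa [tsub_add_cancel_of_le (ENat.one_le_iff_ne_zero.mpr h0),
        show (k:ℕ∞) + 1 = ((k+1:ℕ):ℕ∞) from by exact_mod_cast rfl] at this
    exact le_dOf hne J (shift_up hne J (mem_of_le hne J hk1))

end Part2


/-- Let `C` be an EI category of type ℕ.  For every function `d : ℕ → ℕ∞` such that
`d n ≠ 0` implies `d (n+1) = d n − 1`, the rule `J n = {S(n,r) : r ≤ d n}` is a
Grothendieck topology; moreover every Grothendieck topology none of whose values contains
the empty sieve (a *generic* topology) arises from a unique such function `d`. -/
theorem generic_topologies_classified [SmallCategory ℕ]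
    (hne : ∀ m n : ℕ, Nonempty ((n : ℕ) ⟶ (m : ℕ)) ↔ m ≤ n)
    (htrans : ∀ (m n : ℕ) (f g : (n : ℕ) ⟶ (m : ℕ)), ∃ e : (n : ℕ) ⟶ (n : ℕ), e ≫ f = g)
    (hgen : ∀ (m n : ℕ) (f : (n : ℕ) ⟶ (m : ℕ)), m < n →
      ∃ (g : (n : ℕ) ⟶ ((m + 1 : ℕ) : ℕ)) (h : ((m + 1 : ℕ) : ℕ) ⟶ (m : ℕ)), f = g ≫ h)
    (hEI : ∀ (n : ℕ) (f : (n : ℕ) ⟶ (n : ℕ)), IsIso f) :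
    (∀ d : ℕ → ℕ∞, (∀ n : ℕ, d n ≠ 0 → d (n + 1) = d n - 1) →
      ∃ J : GrothendieckTopology ℕ, ∀ (n : ℕ) (T : Sieve (n : ℕ)),
        T ∈ J (n : ℕ) ↔ ∃ r : ℕ, (r : ℕ∞) ≤ d n ∧ T = degSieve hne n r) ∧
    (∀ J : GrothendieckTopology ℕ, (∀ n : ℕ, (⊥ : Sieve (n : ℕ)) ∉ J (n : ℕ)) →
      ∃! d : ℕ → ℕ∞, (∀ n : ℕ, d n ≠ 0 → d (n + 1) = d n - 1) ∧
        ∀ (n : ℕ) (T : Sieve (n : ℕ)),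
          T ∈ J (n : ℕ) ↔ ∃ r : ℕ, (r : ℕ∞) ≤ d n ∧ T = degSieve hne n r) := by
  constructor
  · intro d hd
    exact ⟨mkTop hne htrans hgen hd, fun n T => Iff.rfl⟩
  · intro J hg
    refine ⟨dOf hne J, ⟨dOf_step hne J, J_iff hne htrans hgen J hg⟩, ?_⟩
    rintro d' ⟨hd', hiff⟩
    funext n
    have key : ∀ r : ℕ, (r:ℕ∞) ≤ d' n ↔ (r:ℕ∞) ≤ dOf hne J n := by
      intro r
      constructor
      · intro h
        have hmem : degSieve hne n r ∈ J (n:ℕ) := (hiff n _).mpr ⟨r, h, rfl⟩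
        obtain ⟨r', hr', heq⟩ := (J_iff hne htrans hgen J hg n _).mp hmem
        exact (deg_inj hne heq) ▸ hr'
      · intro h
        have hmem : degSieve hne n r ∈ J (n:ℕ) :=
          (J_iff hne htrans hgen J hg n _).mpr ⟨r, h, rfl⟩
        obtain ⟨r', hr', heq⟩ := (hiff n _).mp hmem
        exact (deg_inj hne heq) ▸ hr'
    exact le_antisymm (enat_le_of_nat fun k h => (key k).mp h)
      (enat_le_of_nat fun k h => (key k).mpr h)
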